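/- Fix κ < 1. Then for λ sufficiently large (equivalently s = √(κ/λ) sufficiently small), the sequence defined by V₀ = 1 and V_{d} ≤ f(V_{d−1}) with f(x) = (1/(1−sx))·exp(κ(1−s)(x−1)/(1−sx)), satisfies limsup_d V_d < ∞; specifically V_d − 1 ≤ (s + Cs²)·Σ_{i=0}^{d−1} (κ+ε)^i for suitable constants C and ε with κ + ε < 1. -/

import Mathlib

set_option maxHeartbeats 1000000 in
lemma key_step (κ s x : ℝ) (hκ0 : 0 < κ) (hκ1 : κ < 1) (hs : 0 < s)
    (hs' : s ≤ (1-κ)^2/1000) (hx : 1 ≤ x)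
    (hxM : x - 1 ≤ 2*(s + 13*s^2)/(1-κ)) :
    (1 / (1 - s * x)) * Real.exp (κ * (1 - s) * (x - 1) / (1 - s * x))
      ≤ 1 + (s + 13 * s^2) + (κ + (1-κ)/2) * (x - 1) := by
  obtain ⟨y, rfl⟩ : ∃ y, x = 1 + y := ⟨x - 1, by ring⟩
  have h1κ : 0 < 1 - κ := by linarith
  have hy0 : 0 ≤ y := by linarith
  have hs1 : s ≤ (1-κ)/1000 := by nlinarith
  have hs2 : s ≤ 1/1000 := by nlinarith
  have hyA : (1 + y - 1) * (1-κ) ≤ 2*(s + 13*s^2) := by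
    have := (le_div_iff₀ h1κ).mp hxM
    linarith
  have hy1 : y ≤ (1-κ)/250 := by nlinarith
  have hy2 : y ≤ 1/250 := by nlinarith
  have hu : s * (1 + y) ≤ 1/900 := by nlinarith
  have hDu : 0 < 1 - s * (1 + y) := by linarith
  have h1s : 0 ≤ 1 - s := by linarith
  have ht0 : 0 ≤ κ * (1 - s) * (1 + y - 1) / (1 - s * (1 + y)) := by
    apply div_nonneg _ hDu.le
    have : (1:ℝ) + y - 1 = y := by ring
    rw [this]
    exact mul_nonneg (mul_nonneg hκ0.le h1s) hy0
  have ht1 : κ * (1 - s) * (1 + y - 1) / (1 - s * (1 + y)) < 1 := by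
    rw [div_lt_one hDu]; nlinarith
  have hexp : Real.exp (κ * (1 - s) * (1 + y - 1) / (1 - s * (1 + y))) ≤
      1 / (1 - κ * (1 - s) * (1 + y - 1) / (1 - s * (1 + y))) :=
    Real.exp_bound_div_one_sub_of_interval ht0 ht1
  have hD : 0 < 1 - s * (1 + y) - κ * (1 - s) * (1 + y - 1) := by nlinarith
  have hsy : s * y ≤ (1-κ)/1000 * y := mul_le_mul_of_nonneg_right hs1 hy0
  have hyy : y * y ≤ (1-κ)/250 * y := mul_le_mul_of_nonneg_right hy1 hy0
  have hss : s * s ≤ 1/1000 * s := mul_le_mul_of_nonneg_right hs2 hs.le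
  have hκy : κ * y ≤ y := by nlinarith
  have hmain : 1 / (1 - s * (1 + y) - κ * (1 - s) * (1 + y - 1))
      ≤ 1 + (s + 13 * s^2) + (κ + (1-κ)/2) * (1 + y - 1) := by
    rw [div_le_iff₀ hD]
    nlinarith [mul_nonneg (mul_nonneg hy0 hy0) hs.le, sq_nonneg s,
      mul_nonneg (mul_nonneg hs.le hs.le) hs.le,
      mul_nonneg (mul_nonneg hκ0.le hy0) hs.le,
      mul_le_mul_of_nonneg_right hsy hy0,
      mul_le_mul_of_nonneg_left hsy hκ0.le,
      mul_le_mul_of_nonneg_left hyy hκ0.le,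
      mul_le_mul_of_nonneg_left hss hκ0.le,
      mul_le_mul_of_nonneg_right hss hy0,
      mul_le_mul_of_nonneg_right hss hs.le]
  calc (1 / (1 - s * (1 + y))) * Real.exp (κ * (1 - s) * (1 + y - 1) / (1 - s * (1 + y)))
      ≤ (1 / (1 - s * (1 + y))) * (1 / (1 - κ * (1 - s) * (1 + y - 1) / (1 - s * (1 + y)))) := by
        apply mul_le_mul_of_nonneg_left hexp (by positivity)
    _ = 1 / (1 - s * (1 + y) - κ * (1 - s) * (1 + y - 1)) := by
        rw [div_mul_div_comm, one_mul]
        congr 1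
        field_simp
    _ ≤ 1 + (s + 13 * s^2) + (κ + (1-κ)/2) * (1 + y - 1) := hmain



lemma geom_sum_le_my (r : ℝ) (h0 : 0 ≤ r) (h1 : r < 1) (d : ℕ) :
    ∑ i ∈ Finset.range d, r ^ i ≤ 1 / (1 - r) := by
  induction d with
  | zero =>
    have h1r : 0 < 1 - r := by linarith
    simp only [Finset.range_zero, Finset.sum_empty]
    exact div_nonneg zero_le_one h1r.le
  | succ n ih =>
    rw [geom_sum_succ]
    have h1r : 0 < 1 - r := by linarith
    rw [le_div_iff₀ h1r] at ih ⊢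
    nlinarith [mul_le_mul_of_nonneg_left ih h0]


/-- For fixed `κ < 1` and `s` small enough, any sequence with `V₀ = 1`, `V_d ≥ 1` and
`V_{d+1} ≤ f(V_d)` satisfies `V_d - 1 ≤ (s + Cs²) Σ_{i<d} (κ+ε)^i`, hence is bounded. -/
theorem stmt_12 (κ : ℝ) (hκ0 : 0 < κ) (hκ1 : κ < 1) :
    ∃ ε C : ℝ, 0 < ε ∧ κ + ε < 1 ∧ 0 < C ∧
      ∃ s0 : ℝ, 0 < s0 ∧ ∀ s : ℝ, 0 < s → s < s0 →
        ∀ V : ℕ → ℝ, V 0 = 1 → (∀ d, 1 ≤ V d) →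
          (∀ d, V (d + 1) ≤
            (1 / (1 - s * V d)) * Real.exp (κ * (1 - s) * (V d - 1) / (1 - s * V d))) →
          (∀ d, V d - 1 ≤ (s + C * s ^ 2) * ∑ i ∈ Finset.range d, (κ + ε) ^ i) ∧
          (∃ B : ℝ, ∀ d, V d ≤ B) := by
  have h1κ : 0 < 1 - κ := by linarith
  refine ⟨(1-κ)/2, 13, by linarith, by linarith, by norm_num,
    (1-κ)^2/1000, by positivity, ?_⟩
  intro s hs hss0 V hV0 hV1 hVf
  have hr0 : 0 ≤ κ + (1-κ)/2 := by linarith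
  have hr1 : κ + (1-κ)/2 < 1 := by linarith
  have hC : 0 ≤ s + 13 * s^2 := by positivity
  have hrdiv : 1 / (1 - (κ + (1-κ)/2)) = 2 / (1-κ) := by
    rw [show 1 - (κ + (1-κ)/2) = (1-κ)/2 by ring, one_div_div]
  have hsum : ∀ d, ∑ i ∈ Finset.range d, (κ + (1-κ)/2) ^ i ≤ 2 / (1-κ) := by
    intro d; rw [← hrdiv]; exact geom_sum_le_my _ hr0 hr1 d
  have hmain : ∀ d, V d - 1 ≤ (s + 13 * s^2) * ∑ i ∈ Finset.range d, (κ + (1-κ)/2) ^ i := by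
    intro d
    induction d with
    | zero => simp [hV0]
    | succ n ih =>
      have hxM : V n - 1 ≤ 2*(s + 13*s^2)/(1-κ) := by
        calc V n - 1 ≤ (s + 13 * s^2) * ∑ i ∈ Finset.range n, (κ + (1-κ)/2) ^ i := ih
          _ ≤ (s + 13 * s^2) * (2/(1-κ)) := mul_le_mul_of_nonneg_left (hsum n) hC
          _ = 2*(s + 13*s^2)/(1-κ) := by ring
      have hkey := key_step κ s (V n) hκ0 hκ1 hs (by linarith) (hV1 n) hxM
      have hstep : V (n+1) ≤ 1 + (s + 13*s^2) + (κ + (1-κ)/2) * (V n - 1) :=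
        le_trans (hVf n) hkey
      have hsum_nn : 0 ≤ ∑ i ∈ Finset.range n, (κ + (1-κ)/2) ^ i :=
        Finset.sum_nonneg fun i _ => pow_nonneg hr0 i
      rw [geom_sum_succ]
      have h2 : (κ + (1-κ)/2) * (V n - 1)
          ≤ (κ + (1-κ)/2) * ((s + 13 * s^2) * ∑ i ∈ Finset.range n, (κ + (1-κ)/2) ^ i) :=
        mul_le_mul_of_nonneg_left ih hr0
      nlinarith
  refine ⟨hmain, ⟨1 + (s + 13*s^2) * (2/(1-κ)), fun d => ?_⟩⟩
  have := hmain d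
  have h2 := mul_le_mul_of_nonneg_left (hsum d) hC
  linarith
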